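/- Let s = s₁⋯s_m be a sign string with s₁ = +, and let T_s be a semistandard Young tableau of content s. Then the conjugate of the standardization of the promoted tableau equals the promotion of the conjugate of the standardization: (jdt(T_s))~′ = jdt(T̃_s′), where jdt(T_s) is regarded as a tableau of content s₂⋯s_m s₁ and ~ denotes standardization. -/

import Mathlib

/-!
STATEMENT 4: Let `s = s₁⋯s_m` be a sign string with `s₁ = +`, and let `T_s` be a
semistandard Young tableau of content `s` (rectangular shape `(3,…,3) ⊢ 3n`).  Then the
conjugate of the standardization of the promoted tableau equals the promotion of the
conjugate of the standardization: `(jdt(T_s))~′ = jdt(T̃_s′)`, where `jdt(T_s)` is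
regarded as a tableau of content `s₂⋯s_m s₁`.

Encodings:
* A sign string is encoded as `s : ℕ → Bool` (`s i = true` meaning `s_i = −`), with
  only the positions `1, …, m` relevant; the multiplicity of the value `i` is `2` for a
  minus and `1` for a plus.
* A filling of the `n × 3` rectangle (shape `(3,…,3) ⊢ 3n`) is a function
  `f : ℕ × ℕ → ℕ` on cells `(row, column)`, relevant on `Rect n = range n ×ˢ range 3`;
  its conjugate, a filling of `RectT n = range 3 ×ˢ range n` (shape `(n,n,n)`), is
  `p ↦ f (p.2, p.1)`.
* The standardization relabels the entries by `1, …, 3n` in increasing order of value,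
  a doubled value receiving consecutive labels with the smaller label in the box whose
  column is further left.
* Jeu-de-taquin promotion is implemented literally as in the paper; for the
  standard tableau `T̃_s′` of shape `(n,n,n) ⊢ 3n` one takes `ℓ = 3n`.
-/

/-- The cell directly below `p`. -/
def below (p : ℕ × ℕ) : ℕ × ℕ := (p.1 + 1, p.2)

/-- The cell directly to the right of `p`. -/
def rightOf (p : ℕ × ℕ) : ℕ × ℕ := (p.1, p.2 + 1)

/-- Slide the empty box located at `p` through the region `R` with entries `f`,
following the jeu-de-taquin rule, until it reaches an outer corner, which is then
removed from the region. -/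
def slide : ℕ → Finset (ℕ × ℕ) → ((ℕ × ℕ) → ℕ) → ℕ × ℕ →
    Finset (ℕ × ℕ) × ((ℕ × ℕ) → ℕ)
  | 0, R, f, p => (R.erase p, f)
  | fuel + 1, R, f, p =>
    if below p ∈ R ∧ rightOf p ∈ R then
      (if f (below p) ≤ f (rightOf p) then
        slide fuel R (Function.update f p (f (below p))) (below p)
      else
        slide fuel R (Function.update f p (f (rightOf p))) (rightOf p))
    else if below p ∈ R then
      slide fuel R (Function.update f p (f (below p))) (below p)
    else if rightOf p ∈ R then
      slide fuel R (Function.update f p (f (rightOf p))) (rightOf p)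
    else
      (R.erase p, f)

/-- One removal-and-slide pass: remove the entry `1` in the top-left corner `(0,0)` and
slide the resulting empty box out of the tableau. -/
def onePass (Rf : Finset (ℕ × ℕ) × ((ℕ × ℕ) → ℕ)) :
    Finset (ℕ × ℕ) × ((ℕ × ℕ) → ℕ) :=
  slide (Rf.1.card + 1) Rf.1 Rf.2 (0, 0)

/-- Jeu-de-taquin promotion of the filling `f` of the region `R` with entries in
`{1,…,ℓ}`: one removal-and-slide pass for each occurrence of the entry `1`, then all
entries are decremented by `1` and every vacated box is filled with `ℓ`. -/
def promote (R : Finset (ℕ × ℕ)) (f : (ℕ × ℕ) → ℕ) (ℓ : ℕ) : (ℕ × ℕ) → ℕ :=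
  let Rf := onePass^[(R.filter (fun p => f p = 1)).card] (R, f)
  fun p => if p ∈ Rf.1 then Rf.2 p - 1 else if p ∈ R then ℓ else 0

/-- The multiplicity of the value `v` prescribed by the sign string `s`:
`2` for a minus (`s v = true`), `1` for a plus. -/
def multOf (s : ℕ → Bool) (v : ℕ) : ℕ := if s v then 2 else 1

/-- The cells of the rectangle with `n` rows of length 3 (shape `(3,…,3) ⊢ 3n`). -/
def Rect (n : ℕ) : Finset (ℕ × ℕ) := Finset.range n ×ˢ Finset.range 3

/-- The cells of the rectangle with 3 rows of length `n` (shape `(n,n,n) ⊢ 3n`). -/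
def RectT (n : ℕ) : Finset (ℕ × ℕ) := Finset.range 3 ×ˢ Finset.range n

/-- `f` is a semistandard Young tableau on the region `R` of content given by the sign
string `s` of length `m`: rows weakly increase, columns strictly increase, entries lie
in `{1, …, m}` and the value `v` occurs exactly `multOf s v` times. -/
def IsTableauOfContent (R : Finset (ℕ × ℕ)) (m : ℕ) (s : ℕ → Bool)
    (f : (ℕ × ℕ) → ℕ) : Prop :=
  (∀ p ∈ R, rightOf p ∈ R → f p ≤ f (rightOf p)) ∧
  (∀ p ∈ R, below p ∈ R → f p < f (below p)) ∧
  (∀ p ∈ R, 1 ≤ f p ∧ f p ≤ m) ∧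
  (∀ v, 1 ≤ v → v ≤ m → (R.filter (fun p => f p = v)).card = multOf s v)

/-- The standardization of a filling `f` of the region `R` of content `s`: the entries
are relabeled by `1, 2, 3, …` in increasing order of value, the two occurrences of a
doubled value receiving consecutive labels with the smaller label placed in the box
whose column is further left. -/
def standardize (R : Finset (ℕ × ℕ)) (s : ℕ → Bool) (f : (ℕ × ℕ) → ℕ) :
    (ℕ × ℕ) → ℕ :=
  fun p =>
    if p ∈ R then
      (∑ u ∈ Finset.Icc 1 (f p - 1), multOf s u) +
        (if ∃ q ∈ R, f q = f p ∧ q.2 < p.2 then 2 else 1)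
    else 0

/-- The sign string `s₂ ⋯ s_m s₁` obtained from `s₁ ⋯ s_m` by cyclic shift. -/
def shiftS (m : ℕ) (s : ℕ → Bool) : ℕ → Bool :=
  fun v => if v = m then s 1 else s (v + 1)


/-! ### Auxiliary material -/

open Finset

/-- Transpose of a cell. -/
def tpp (q : ℕ × ℕ) : ℕ × ℕ := (q.2, q.1)

@[simp] lemma tpp_tpp (q : ℕ × ℕ) : tpp (tpp q) = q := rfl

lemma tpp_inj {q r : ℕ × ℕ} (h : tpp q = tpp r) : q = r := by
  cases q; cases r; simpa [tpp, Prod.ext_iff, and_comm] using h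

@[simp] lemma mem_Rect {n : ℕ} {q : ℕ × ℕ} : q ∈ Rect n ↔ q.1 < n ∧ q.2 < 3 := by
  simp [Rect, Finset.mem_product]

@[simp] lemma mem_RectT {n : ℕ} {q : ℕ × ℕ} : q ∈ RectT n ↔ q.1 < 3 ∧ q.2 < n := by
  simp [RectT, Finset.mem_product]

@[simp] lemma tpp_mem {n : ℕ} {q : ℕ × ℕ} : tpp q ∈ RectT n ↔ q ∈ Rect n := by
  simp [tpp, and_comm]

lemma below_tpp (p : ℕ × ℕ) : below (tpp p) = tpp (rightOf p) := rfl
lemma rightOf_tpp (p : ℕ × ℕ) : rightOf (tpp p) = tpp (below p) := rfl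

lemma below_ne (p : ℕ × ℕ) : below p ≠ p := by
  simp [below, Prod.ext_iff]
lemma rightOf_ne (p : ℕ × ℕ) : rightOf p ≠ p := by
  simp [rightOf, Prod.ext_iff]
lemma below_ne_rightOf (p : ℕ × ℕ) : below p ≠ rightOf p := by
  simp [below, rightOf, Prod.ext_iff]

lemma multOf_pos (s : ℕ → Bool) (v : ℕ) : 1 ≤ multOf s v := by
  unfold multOf; split <;> omega
lemma multOf_le_two (s : ℕ → Bool) (v : ℕ) : multOf s v ≤ 2 := by
  unfold multOf; split <;> omega

/-- Partial sums of multiplicities: labels for value `v` start after `Ssum s v`. -/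
def Ssum (s : ℕ → Bool) (v : ℕ) : ℕ := ∑ u ∈ Finset.Icc 1 (v - 1), multOf s u

lemma Ssum_succ (s : ℕ → Bool) {a : ℕ} (ha : 1 ≤ a) :
    Ssum s (a + 1) = Ssum s a + multOf s a := by
  unfold Ssum
  have h : a - 1 + 1 = a := by omega
  rw [show a + 1 - 1 = (a - 1) + 1 by omega, Finset.sum_Icc_succ_top (by omega), h]

lemma Ssum_mono (s : ℕ → Bool) {a b : ℕ} (h : a ≤ b) : Ssum s a ≤ Ssum s b := by
  apply Finset.sum_le_sum_of_subset
  apply Finset.Icc_subset_Icc_right; omega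

lemma Ssum_add_mult_le (s : ℕ → Bool) {a b : ℕ} (ha : 1 ≤ a) (h : a < b) :
    Ssum s a + multOf s a ≤ Ssum s b := by
  rw [← Ssum_succ s ha]; exact Ssum_mono s (by omega)

lemma Ssum_pos (s : ℕ → Bool) {a : ℕ} (ha : 2 ≤ a) : 1 ≤ Ssum s a := by
  have : Ssum s 2 ≤ Ssum s a := Ssum_mono s ha
  have h2 : Ssum s 2 = multOf s 1 := by simp [Ssum]
  have := multOf_pos s 1
  omega

/-- Standardization label in the presence of a hole at `p`. -/
def stdH (n : ℕ) (s : ℕ → Bool) (f : (ℕ × ℕ) → ℕ) (p q : ℕ × ℕ) : ℕ :=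
  Ssum s (f q) + (if ∃ q' ∈ (Rect n).erase p, f q' = f q ∧ q'.2 < q.2 then 2 else 1)

/-- The invariant carried through the simultaneous slide. -/
structure SInv (n m : ℕ) (s : ℕ → Bool) (f g : (ℕ × ℕ) → ℕ) (p : ℕ × ℕ) : Prop where
  hp : p ∈ Rect n
  row : ∀ q ∈ Rect n, rightOf q ∈ Rect n → q ≠ p → rightOf q ≠ p → f q ≤ f (rightOf q)
  col : ∀ q ∈ Rect n, below q ∈ Rect n → q ≠ p → below q ≠ p → f q < f (below q)
  brow : ∀ q ∈ Rect n, rightOf q = p → rightOf (rightOf q) ∈ Rect n →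
    f q ≤ f (rightOf (rightOf q))
  bcol : ∀ q ∈ Rect n, below q = p → below (below q) ∈ Rect n →
    f q < f (below (below q))
  range : ∀ q ∈ Rect n, q ≠ p → 2 ≤ f q ∧ f q ≤ m
  count : ∀ v, 2 ≤ v → v ≤ m →
    (((Rect n).erase p).filter (fun q => f q = v)).card = multOf s v
  gD : ∀ q ∈ Rect n, q ≠ p → g (tpp q) = stdH n s f p q

/-- Strictness along a column not containing the hole. -/
lemma col_chain {n : ℕ} {f : (ℕ × ℕ) → ℕ} {p : ℕ × ℕ}
    (hcol : ∀ q ∈ Rect n, below q ∈ Rect n → q ≠ p → below q ≠ p → f q < f (below q))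
    {c : ℕ} (hc : c < 3) (hpc : p.2 ≠ c) :
    ∀ {i j : ℕ}, i < j → j < n → f (i, c) < f (j, c) := by
  intro i j hij hj
  induction j with
  | zero => omega
  | succ j ih =>
    rcases Nat.lt_or_ge i j with h | h
    · have h1 : f (i, c) < f (j, c) := ih h (by omega)
      have h2 : f (j, c) < f (j + 1, c) := by
        have := hcol (j, c) (by simp; omega) (by simp [below]; omega)
          (by simp [Prod.ext_iff]; omega) (by simp [below, Prod.ext_iff]; omega)
        simpa [below] using this
      omega
    · have hij' : i = j := by omega
      subst hij'
      have := hcol (i, c) (by simp; omega) (by simp [below]; omega)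
        (by simp [Prod.ext_iff]; omega) (by simp [below, Prod.ext_iff]; omega)
      simpa [below] using this

/-- Two distinct cells in the same column (not the hole's column) have distinct values. -/
lemma col_ne {n : ℕ} {f : (ℕ × ℕ) → ℕ} {p : ℕ × ℕ}
    (hcol : ∀ q ∈ Rect n, below q ∈ Rect n → q ≠ p → below q ≠ p → f q < f (below q))
    {q q' : ℕ × ℕ} (hq : q ∈ Rect n) (hq' : q' ∈ Rect n) (hne : q ≠ q')
    (hcc : q.2 = q'.2) (hpc : p.2 ≠ q.2) : f q ≠ f q' := by
  obtain ⟨a, b⟩ := q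
  obtain ⟨a', b'⟩ := q'
  simp only at hcc
  subst hcc
  simp only [mem_Rect] at hq hq'
  have hne' : a ≠ a' := by simpa [Prod.ext_iff] using hne
  rcases Nat.lt_or_ge a a' with h | h
  · exact Nat.ne_of_lt (col_chain hcol hq.2 hpc h hq'.1)
  · exact (Nat.ne_of_lt (col_chain hcol hq.2 hpc (by omega) hq.1)).symm

/-- Moving the value from `p₁` into the hole `p` does not change value counts. -/
lemma count_swap {R : Finset (ℕ × ℕ)} {p p₁ : ℕ × ℕ} (hp : p ∈ R) (hp₁ : p₁ ∈ R)
    (f : (ℕ × ℕ) → ℕ) (v : ℕ) :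
    ((R.erase p₁).filter (fun q => Function.update f p (f p₁) q = v)).card
      = ((R.erase p).filter (fun q => f q = v)).card := by
  rcases eq_or_ne p p₁ with h | hne
  · subst h
    congr 1
    apply Finset.filter_congr
    intro q hq
    have : q ≠ p := (Finset.mem_erase.mp hq).1
    simp [Function.update_of_ne this]
  · have key : ((R.erase p₁).filter (fun q => Function.update f p (f p₁) q = v))
        = ((R.erase p).filter (fun q => f q = v)).map (Equiv.swap p p₁).toEmbedding := by
      ext q
      rw [Finset.mem_map_equiv, Equiv.symm_swap]
      rcases eq_or_ne q p with rfl | hqp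
      · rw [Equiv.swap_apply_left]
        simp [Finset.mem_filter, Finset.mem_erase, hp, hp₁, hne, hne.symm, Function.update_self]
      · rcases eq_or_ne q p₁ with rfl | hqp₁
        · rw [Equiv.swap_apply_right]
          simp [Finset.mem_filter, Finset.mem_erase, hne]
        · rw [Equiv.swap_apply_of_ne_of_ne hqp hqp₁]
          simp [Finset.mem_filter, Finset.mem_erase, hqp, hqp₁, Function.update_of_ne hqp]
    rw [key, Finset.card_map]

lemma stdH_tie_le {n m : ℕ} {s : ℕ → Bool} {f g : (ℕ × ℕ) → ℕ} {p : ℕ × ℕ}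
    (I : SInv n m s f g p) {q : ℕ × ℕ} (hq : q ∈ Rect n) (hqp : q ≠ p) :
    (if ∃ q' ∈ (Rect n).erase p, f q' = f q ∧ q'.2 < q.2 then 2 else 1) ≤ multOf s (f q) := by
  split
  · next h =>
    obtain ⟨q', hq', hfq', hlt⟩ := h
    have hrange := I.range q hq hqp
    have hcard := I.count (f q) hrange.1 hrange.2
    have h2 : 1 < (((Rect n).erase p).filter (fun r => f r = f q)).card := by
      rw [Finset.one_lt_card]
      refine ⟨q', Finset.mem_filter.mpr ⟨hq', hfq'⟩, q,
        Finset.mem_filter.mpr ⟨Finset.mem_erase.mpr ⟨hqp, hq⟩, rfl⟩, ?_⟩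
      intro h; subst h; omega
    omega
  · exact multOf_pos s _

lemma stdH_lt {n m : ℕ} {s : ℕ → Bool} {f g : (ℕ × ℕ) → ℕ} {p : ℕ × ℕ}
    (I : SInv n m s f g p) {q r : ℕ × ℕ} (hq : q ∈ Rect n) (hqp : q ≠ p)
    (hr : r ∈ Rect n) (hrp : r ≠ p) (h : f q < f r) :
    stdH n s f p q < stdH n s f p r := by
  unfold stdH
  have h1 := stdH_tie_le I hq hqp
  have h2 : Ssum s (f q) + multOf s (f q) ≤ Ssum s (f r) :=
    Ssum_add_mult_le s (by have := (I.range q hq hqp).1; omega) h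
  have : (1:ℕ) ≤ if ∃ q' ∈ (Rect n).erase p, f q' = f r ∧ q'.2 < r.2 then 2 else 1 := by
    split <;> omega
  omega

/-- In the tie case the two neighbours of the hole are the only cells with their value,
and the lower one gets the smaller label. -/
lemma stdH_tie {n m : ℕ} {s : ℕ → Bool} {f g : (ℕ × ℕ) → ℕ} {p : ℕ × ℕ}
    (I : SInv n m s f g p) (hb : below p ∈ Rect n) (hr : rightOf p ∈ Rect n)
    (heq : f (below p) = f (rightOf p)) :
    stdH n s f p (below p) + 1 = stdH n s f p (rightOf p) := by
  unfold stdH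
  rw [heq]
  have hbp := below_ne p
  have hrp := rightOf_ne p
  have hbr := below_ne_rightOf p
  have hrange := I.range (below p) hb hbp
  rw [heq] at hrange
  have hcard := I.count (f (rightOf p)) hrange.1 hrange.2
  have ht1 : ¬ ∃ q' ∈ (Rect n).erase p, f q' = f (rightOf p) ∧ q'.2 < (below p).2 := by
    rintro ⟨q', hq', hfq', hlt⟩
    have hq'b : q' ≠ below p := by
      intro h; subst h; omega
    have hq'r : q' ≠ rightOf p := by
      intro h; subst h; simp [below, rightOf] at hlt
    have h3 : 2 < (((Rect n).erase p).filter (fun r => f r = f (rightOf p))).card := by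
      rw [Finset.two_lt_card]
      exact ⟨q', Finset.mem_filter.mpr ⟨hq', hfq'⟩,
        below p, Finset.mem_filter.mpr ⟨Finset.mem_erase.mpr ⟨hbp, hb⟩, heq⟩,
        rightOf p, Finset.mem_filter.mpr ⟨Finset.mem_erase.mpr ⟨hrp, hr⟩, rfl⟩,
        hq'b, hq'r, hbr⟩
    have := multOf_le_two s (f (rightOf p))
    omega
  have ht2 : ∃ q' ∈ (Rect n).erase p, f q' = f (rightOf p) ∧ q'.2 < (rightOf p).2 := by
    exact ⟨below p, Finset.mem_erase.mpr ⟨hbp, hb⟩, heq, by simp [below, rightOf]⟩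
  rw [if_neg ht1, if_pos ht2]

/-- The two slides take corresponding branches. -/
lemma branch_iff {n m : ℕ} {s : ℕ → Bool} {f g : (ℕ × ℕ) → ℕ} {p : ℕ × ℕ}
    (I : SInv n m s f g p) (hb : below p ∈ Rect n) (hr : rightOf p ∈ Rect n) :
    (f (below p) ≤ f (rightOf p) ↔ ¬ (g (tpp (rightOf p)) ≤ g (tpp (below p)))) := by
  rw [I.gD (below p) hb (below_ne p), I.gD (rightOf p) hr (rightOf_ne p)]
  rcases lt_trichotomy (f (below p)) (f (rightOf p)) with h | h | h
  · have := stdH_lt I hb (below_ne p) hr (rightOf_ne p) h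
    constructor
    · intro _; omega
    · intro _; omega
  · have := stdH_tie I hb hr h
    constructor <;> intro _ <;> omega
  · have := stdH_lt I hr (rightOf_ne p) hb (below_ne p) h
    constructor
    · intro h'; omega
    · intro h'; omega

lemma down_step {n m : ℕ} {s : ℕ → Bool} {f g : (ℕ × ℕ) → ℕ} {p : ℕ × ℕ}
    (I : SInv n m s f g p) (hb : below p ∈ Rect n)
    (hcmp : rightOf p ∈ Rect n → f (below p) ≤ f (rightOf p)) :
    SInv n m s (Function.update f p (f (below p)))
      (Function.update g (tpp p) (g (tpp (below p)))) (below p) := by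
  have hpR := I.hp
  have hbp := below_ne p
  set a := f (below p) with ha
  set f₁ := Function.update f p a with hf₁
  have hfq : ∀ q, q ≠ p → f₁ q = f q := fun q hq => Function.update_of_ne hq _ _
  have hfp : f₁ p = a := Function.update_self _ _ _
  constructor
  · exact hb
  · -- row
    intro q hq hrq hq1 hrq1
    rcases eq_or_ne q p with rfl | hqp
    · rw [hfp, hfq _ (rightOf_ne q)]
      exact hcmp hrq
    · rcases eq_or_ne (rightOf q) p with hr | hrp
      · rw [hfq _ hqp, hr, hfp]
        obtain ⟨qr, qc⟩ := q
        obtain ⟨pr, pc⟩ := p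
        have hqe : qr = pr ∧ qc + 1 = pc := by
          simpa [rightOf, Prod.ext_iff] using hr
        obtain ⟨rfl, hqc⟩ := hqe
        subst hqc
        simp only [mem_Rect, below] at hb hq
        have h1 : f (qr, qc) < f (qr + 1, qc) := by
          have := I.col (qr, qc) (by simp only [mem_Rect]; omega)
            (by simp only [below, mem_Rect]; omega)
            (by simp only [ne_eq, Prod.ext_iff]; omega)
            (by simp only [ne_eq, below, Prod.ext_iff]; omega)
          simpa [below] using this
        have h2 : f (qr + 1, qc) ≤ f (qr + 1, qc + 1) := by
          have := I.row (qr + 1, qc) (by simp only [mem_Rect]; omega)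
            (by simp only [rightOf, mem_Rect]; omega)
            (by simp only [ne_eq, Prod.ext_iff]; omega)
            (by simp only [ne_eq, rightOf, Prod.ext_iff]; omega)
          simpa [rightOf] using this
        rw [ha]
        simp only [below]
        omega
      · rw [hfq _ hqp, hfq _ hrp]
        exact I.row q hq hrq hqp hrp
  · -- col
    intro q hq hbq hq1 hbq1
    rcases eq_or_ne q p with rfl | hqp
    · exact absurd rfl hbq1
    · rcases eq_or_ne (below q) p with hbqp | hbqp
      · rw [hfq _ hqp, hbqp, hfp, ha]
        have hbb : below (below q) = below p := by rw [hbqp]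
        exact hbb ▸ I.bcol q hq hbqp (hbb ▸ hb)
      · rw [hfq _ hqp, hfq _ hbqp]
        exact I.col q hq hbq hqp hbqp
  · -- brow
    intro q hq hrq hrr
    obtain ⟨qr, qc⟩ := q
    obtain ⟨pr, pc⟩ := p
    have hqe : qr = pr + 1 ∧ qc + 1 = pc := by
      simpa [rightOf, below, Prod.ext_iff] using hrq
    obtain ⟨rfl, hqc⟩ := hqe
    subst hqc
    have hqp : ((pr + 1, qc) : ℕ × ℕ) ≠ (pr, qc + 1) := by
      simp only [ne_eq, Prod.ext_iff]; omega
    have hrqp : ((pr + 1, qc + 1) : ℕ × ℕ) ≠ (pr, qc + 1) := by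
      simp only [ne_eq, Prod.ext_iff]; omega
    have hrrp : ((pr + 1, qc + 1 + 1) : ℕ × ℕ) ≠ (pr, qc + 1) := by
      simp only [ne_eq, Prod.ext_iff]; omega
    simp only [rightOf] at hrr ⊢
    rw [hfq _ hqp, hfq _ hrrp]
    have h1 : f (pr + 1, qc) ≤ f (pr + 1, qc + 1) := by
      have := I.row (pr + 1, qc) hq (by simpa [rightOf, below, mem_Rect] using hb)
        hqp (by simpa [rightOf] using hrqp)
      simpa [rightOf] using this
    have h2 : f (pr + 1, qc + 1) ≤ f (pr + 1, qc + 1 + 1) := by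
      have := I.row (pr + 1, qc + 1) (by simpa [below, rightOf, mem_Rect] using hb)
        (by simpa [rightOf] using hrr) (by simpa [rightOf] using hrqp)
        (by simpa [rightOf] using hrrp)
      simpa [rightOf] using this
    omega
  · -- bcol
    intro q hq hbq hbb
    have hqe : q = p := by
      obtain ⟨qr, qc⟩ := q; obtain ⟨pr, pc⟩ := p
      simpa [below, Prod.ext_iff] using hbq
    rw [hqe] at hbb ⊢
    rw [hfp]
    rw [hfq _ (show below (below p) ≠ p by
      simp only [ne_eq, below, Prod.ext_iff]; omega)]
    exact I.col (below p) hb hbb (below_ne p)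
      (show below (below p) ≠ p by simp only [ne_eq, below, Prod.ext_iff]; omega)
  · -- range
    intro q hq hq1
    rcases eq_or_ne q p with rfl | hqp
    · rw [hfp]; exact I.range (below q) hb (below_ne q)
    · rw [hfq _ hqp]; exact I.range q hq hqp
  · -- count
    intro v h2 hm'
    rw [count_swap hpR hb f v]
    exact I.count v h2 hm'
  · -- gD
    intro q hq hq1
    rcases eq_or_ne q p with rfl | hqp
    · rw [Function.update_self]
      rw [I.gD (below q) hb (below_ne q)]
      unfold stdH
      rw [hfp, ha]
      congr 1
      have hiff : (∃ q' ∈ (Rect n).erase q, f q' = f (below q) ∧ q'.2 < (below q).2)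
          ↔ (∃ q' ∈ (Rect n).erase (below q), f₁ q' = f (below q) ∧ q'.2 < q.2) := by
        have hcol : (below q).2 = q.2 := rfl
        constructor
        · rintro ⟨q', hq', hfq', hlt⟩
          have hq'p : q' ≠ q := (Finset.mem_erase.mp hq').1
          have hq'b : q' ≠ below q := by
            intro h; subst h; rw [hcol] at hlt; omega
          exact ⟨q', Finset.mem_erase.mpr ⟨hq'b, (Finset.mem_erase.mp hq').2⟩,
            by rw [hfq _ hq'p, hfq'], by rw [← hcol]; exact hlt⟩
        · rintro ⟨q', hq', hfq', hlt⟩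
          have hq'b : q' ≠ below q := (Finset.mem_erase.mp hq').1
          have hq'p : q' ≠ q := by
            intro h; subst h; omega
          rw [hfq _ hq'p] at hfq'
          exact ⟨q', Finset.mem_erase.mpr ⟨hq'p, (Finset.mem_erase.mp hq').2⟩,
            hfq', by rw [hcol]; exact hlt⟩
      simp only [hiff]
    · rw [Function.update_of_ne (fun h => hqp (tpp_inj h))]
      rw [I.gD q hq hqp]
      unfold stdH
      rw [hfq _ hqp]
      congr 1
      have hiff : (∃ q' ∈ (Rect n).erase p, f q' = f q ∧ q'.2 < q.2)
          ↔ (∃ q' ∈ (Rect n).erase (below p), f₁ q' = f q ∧ q'.2 < q.2) := by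
        constructor
        · rintro ⟨q', hq', hfq', hlt⟩
          have hq'p : q' ≠ p := (Finset.mem_erase.mp hq').1
          rcases eq_or_ne q' (below p) with rfl | hq'b
          · refine ⟨p, Finset.mem_erase.mpr ⟨fun h => (below_ne p) h.symm, hpR⟩, ?_, hlt⟩
            rw [hfp, ha, hfq']
          · exact ⟨q', Finset.mem_erase.mpr ⟨hq'b, (Finset.mem_erase.mp hq').2⟩,
              by rw [hfq _ hq'p, hfq'], hlt⟩
        · rintro ⟨q', hq', hfq', hlt⟩
          have hq'b : q' ≠ below p := (Finset.mem_erase.mp hq').1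
          rcases eq_or_ne q' p with h | hq'p
          · refine ⟨below p, Finset.mem_erase.mpr ⟨below_ne p, hb⟩, ?_, ?_⟩
            · rw [← ha, ← hfp, ← h]; exact hfq'
            · show p.2 < q.2
              rw [← h]; exact hlt
          · rw [hfq _ hq'p] at hfq'
            exact ⟨q', Finset.mem_erase.mpr ⟨hq'p, (Finset.mem_erase.mp hq').2⟩, hfq', hlt⟩
      simp only [hiff]

lemma right_step {n m : ℕ} {s : ℕ → Bool} {f g : (ℕ × ℕ) → ℕ} {p : ℕ × ℕ}
    (I : SInv n m s f g p) (hr : rightOf p ∈ Rect n)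
    (hcmp : below p ∈ Rect n → f (rightOf p) < f (below p)) :
    SInv n m s (Function.update f p (f (rightOf p)))
      (Function.update g (tpp p) (g (tpp (rightOf p)))) (rightOf p) := by
  have hpR := I.hp
  have hrp := rightOf_ne p
  set b := f (rightOf p) with hbdef
  set f₁ := Function.update f p b with hf₁
  have hfq : ∀ q, q ≠ p → f₁ q = f q := fun q hq => Function.update_of_ne hq _ _
  have hfp : f₁ p = b := Function.update_self _ _ _
  -- the new column invariant, proved first since it is needed for `gD`
  have hcol₁ : ∀ q ∈ Rect n, below q ∈ Rect n → q ≠ rightOf p → below q ≠ rightOf p →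
      f₁ q < f₁ (below q) := by
    intro q hq hbq hq1 hbq1
    rcases eq_or_ne q p with rfl | hqp
    · rw [hfp, hfq _ (below_ne q)]
      exact hcmp hbq
    · rcases eq_or_ne (below q) p with hbqp | hbqp
      · rw [hfq _ hqp, hbqp, hfp, hbdef]
        obtain ⟨qr, qc⟩ := q
        obtain ⟨pr, pc⟩ := p
        have hqe : qr + 1 = pr ∧ qc = pc := by
          simpa [below, Prod.ext_iff] using hbqp
        have hre : rightOf (pr, pc) = ((qr + 1, qc + 1) : ℕ × ℕ) := by
          simp only [rightOf, Prod.ext_iff]; omega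
        rw [hre]
        simp only [mem_Rect, rightOf] at hr hq
        have h1 : f (qr, qc) ≤ f (qr, qc + 1) := by
          have := I.row (qr, qc) (by simp only [mem_Rect]; omega)
            (by simp only [rightOf, mem_Rect]; omega)
            (by simp only [ne_eq, Prod.ext_iff]; omega)
            (by simp only [ne_eq, rightOf, Prod.ext_iff]; omega)
          simpa [rightOf] using this
        have h2 : f (qr, qc + 1) < f (qr + 1, qc + 1) := by
          have := I.col (qr, qc + 1) (by simp only [mem_Rect]; omega)
            (by simp only [below, mem_Rect]; omega)
            (by simp only [ne_eq, Prod.ext_iff]; omega)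
            (by simp only [ne_eq, below, Prod.ext_iff]; omega)
          simpa [below] using this
        omega
      · rw [hfq _ hqp, hfq _ hbqp]
        exact I.col q hq hbq hqp hbqp
  have hnewchain : ∀ q' ∈ Rect n, q' ≠ p → q'.2 = p.2 → f q' ≠ b := by
    intro q' hq' hne hcc hfb
    have h3 : p.2 < 3 := (mem_Rect.mp hpR).2
    have := col_ne (p := rightOf p) hcol₁ hq' hpR hne hcc
      (by show ¬(p.2 + 1 = q'.2); omega)
    rw [hfq _ hne, hfp] at this
    exact this hfb
  have holdchain : ∀ q' ∈ Rect n, q' ≠ p → q' ≠ rightOf p → q'.2 = p.2 + 1 → f q' ≠ b := by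
    intro q' hq' hne hner hcc hfb
    have := col_ne (p := p) I.col hq' hr hner hcc (by omega)
    exact this (by rw [hfb])
  constructor
  · exact hr
  · -- row
    intro q hq hrq hq1 hrq1
    rcases eq_or_ne q p with rfl | hqp
    · exact absurd rfl hrq1
    · rcases eq_or_ne (rightOf q) p with hrqp | hrqp
      · rw [hfq _ hqp, hrqp, hfp, hbdef]
        have h := I.brow q hq hrqp (by rw [hrqp]; exact hr)
        rwa [hrqp] at h
      · rw [hfq _ hqp, hfq _ hrqp]
        exact I.row q hq hrq hqp hrqp
  · -- col
    exact hcol₁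
  · -- brow
    intro q hq hrq hrr
    have hqe : q = p := by
      obtain ⟨qr, qc⟩ := q; obtain ⟨pr, pc⟩ := p
      simpa [rightOf, Prod.ext_iff] using hrq
    rw [hqe] at hrr ⊢
    rw [hfp]
    rw [hfq _ (show rightOf (rightOf p) ≠ p by
      simp only [ne_eq, rightOf, Prod.ext_iff]; omega)]
    exact I.row (rightOf p) hr hrr (rightOf_ne p)
      (show rightOf (rightOf p) ≠ p by simp only [ne_eq, rightOf, Prod.ext_iff]; omega)
  · -- bcol
    intro q hq hbq hbb
    obtain ⟨qr, qc⟩ := q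
    obtain ⟨pr, pc⟩ := p
    have hqe : qr + 1 = pr ∧ qc = pc + 1 := by
      simpa [below, rightOf, Prod.ext_iff] using hbq
    obtain ⟨hqr, rfl⟩ := hqe
    have hqp : ((qr, pc + 1) : ℕ × ℕ) ≠ (pr, pc) := by
      simp only [ne_eq, Prod.ext_iff]; omega
    have hbbp : ((qr + 1 + 1, pc + 1) : ℕ × ℕ) ≠ (pr, pc) := by
      simp only [ne_eq, Prod.ext_iff]; omega
    simp only [below] at hbb ⊢
    rw [hfq _ hqp, hfq _ hbbp]
    have h1 : f (qr, pc + 1) < f (qr + 1, pc + 1) := by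
      have hbm : ((qr + 1, pc + 1) : ℕ × ℕ) ∈ Rect n := by
        simp only [mem_Rect] at hbb ⊢; omega
      have := I.col (qr, pc + 1) hq (by simpa [below] using hbm)
        hqp (by simp only [ne_eq, below, Prod.ext_iff]; omega)
      simpa [below] using this
    have h2 : f (qr + 1, pc + 1) < f (qr + 1 + 1, pc + 1) := by
      have := I.col (qr + 1, pc + 1) (by simp only [mem_Rect] at hbb ⊢; omega)
        (by simpa [below] using hbb) (by simp only [ne_eq, Prod.ext_iff]; omega)
        (by simp only [ne_eq, below, Prod.ext_iff]; omega)
      simpa [below] using this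
    omega
  · -- range
    intro q hq hq1
    rcases eq_or_ne q p with rfl | hqp
    · rw [hfp]; exact I.range (rightOf q) hr (rightOf_ne q)
    · rw [hfq _ hqp]; exact I.range q hq hqp
  · -- count
    intro v h2 hm'
    rw [count_swap hpR hr f v]
    exact I.count v h2 hm'
  · -- gD
    intro q hq hq1
    rcases eq_or_ne q p with rfl | hqp
    · rw [Function.update_self]
      rw [I.gD (rightOf q) hr (rightOf_ne q)]
      unfold stdH
      rw [hfp, hbdef]
      congr 1
      have hiff : (∃ q' ∈ (Rect n).erase q, f q' = f (rightOf q) ∧ q'.2 < (rightOf q).2)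
          ↔ (∃ q' ∈ (Rect n).erase (rightOf q), f₁ q' = f (rightOf q) ∧ q'.2 < q.2) := by
        constructor
        · rintro ⟨q', hq', hfq', hlt⟩
          have hq'p : q' ≠ q := (Finset.mem_erase.mp hq').1
          have hq'r : q' ≠ rightOf q := by
            intro h; subst h; simp only [rightOf] at hlt; omega
          have hcc : q'.2 ≠ q.2 :=
            fun h => hnewchain q' (Finset.mem_erase.mp hq').2 hq'p h (by rw [hfq', hbdef])
          have hlt' : q'.2 < q.2 := by
            simp only [rightOf] at hlt; omega
          exact ⟨q', Finset.mem_erase.mpr ⟨hq'r, (Finset.mem_erase.mp hq').2⟩,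
            by rw [hfq _ hq'p, hfq'], hlt'⟩
        · rintro ⟨q', hq', hfq', hlt⟩
          have hq'r : q' ≠ rightOf q := (Finset.mem_erase.mp hq').1
          have hq'p : q' ≠ q := by
            intro h; subst h; omega
          rw [hfq _ hq'p] at hfq'
          refine ⟨q', Finset.mem_erase.mpr ⟨hq'p, (Finset.mem_erase.mp hq').2⟩, hfq', ?_⟩
          simp only [rightOf]; omega
      simp only [hiff]
    · rw [Function.update_of_ne (fun h => hqp (tpp_inj h))]
      rw [I.gD q hq hqp]
      unfold stdH
      rw [hfq _ hqp]
      congr 1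
      have hiff : (∃ q' ∈ (Rect n).erase p, f q' = f q ∧ q'.2 < q.2)
          ↔ (∃ q' ∈ (Rect n).erase (rightOf p), f₁ q' = f q ∧ q'.2 < q.2) := by
        constructor
        · rintro ⟨q', hq', hfq', hlt⟩
          have hq'p : q' ≠ p := (Finset.mem_erase.mp hq').1
          rcases eq_or_ne q' (rightOf p) with h | hq'r
          · refine ⟨p, Finset.mem_erase.mpr ⟨fun hh => hrp hh.symm, hpR⟩, ?_, ?_⟩
            · rw [hfp, hbdef, ← h]; exact hfq'
            · have : q'.2 = p.2 + 1 := by rw [h]; rfl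
              omega
          · exact ⟨q', Finset.mem_erase.mpr ⟨hq'r, (Finset.mem_erase.mp hq').2⟩,
              by rw [hfq _ hq'p, hfq'], hlt⟩
        · rintro ⟨q', hq', hfq', hlt⟩
          have hq'r : q' ≠ rightOf p := (Finset.mem_erase.mp hq').1
          rcases eq_or_ne q' p with h | hq'p
          · have hfqb : f q = b := by
              rw [← hfq', h, hfp]
            have hq2 : q.2 ≠ p.2 + 1 := by
              intro hh
              exact holdchain q hq hqp hq1 hh hfqb
            have hlt2 : p.2 < q.2 := by
              have : q'.2 = p.2 := congrArg Prod.snd h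
              omega
            refine ⟨rightOf p, Finset.mem_erase.mpr ⟨hrp, hr⟩, hfqb.symm, ?_⟩
            show p.2 + 1 < q.2
            omega
          · rw [hfq _ hq'p] at hfq'
            exact ⟨q', Finset.mem_erase.mpr ⟨hq'p, (Finset.mem_erase.mp hq').2⟩, hfq', hlt⟩
      simp only [hiff]

lemma slide_sim {n m : ℕ} {s : ℕ → Bool} :
    ∀ (fuel : ℕ) (f g : (ℕ × ℕ) → ℕ) (p : ℕ × ℕ), SInv n m s f g p →
      n + 1 ≤ fuel + p.1 + p.2 →
      ∃ c f' g', slide fuel (Rect n) f p = ((Rect n).erase c, f') ∧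
        slide fuel (RectT n) g (tpp p) = ((RectT n).erase (tpp c), g') ∧
        SInv n m s f' g' c ∧ below c ∉ Rect n ∧ rightOf c ∉ Rect n := by
  intro fuel
  induction fuel with
  | zero =>
    intro f g p I hfuel
    have hp := I.hp
    simp only [mem_Rect] at hp
    refine ⟨p, f, g, rfl, rfl, I, ?_, ?_⟩
    · simp only [mem_Rect, below]; omega
    · simp only [mem_Rect, rightOf]; omega
  | succ fuel ih =>
    intro f g p I hfuel
    have hbt : below (tpp p) ∈ RectT n ↔ rightOf p ∈ Rect n := by
      rw [below_tpp]; exact tpp_mem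
    have hrt : rightOf (tpp p) ∈ RectT n ↔ below p ∈ Rect n := by
      rw [rightOf_tpp]; exact tpp_mem
    by_cases hb : below p ∈ Rect n
    · by_cases hr : rightOf p ∈ Rect n
      · by_cases hfc : f (below p) ≤ f (rightOf p)
        · -- down move
          have hgc : ¬ (g (below (tpp p)) ≤ g (rightOf (tpp p))) := by
            rw [below_tpp, rightOf_tpp]
            exact (branch_iff I hb hr).mp hfc
          have e1 : slide (fuel + 1) (Rect n) f p
              = slide fuel (Rect n) (Function.update f p (f (below p))) (below p) := by
            simp only [slide]; rw [if_pos ⟨hb, hr⟩, if_pos hfc]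
          have e2 : slide (fuel + 1) (RectT n) g (tpp p)
              = slide fuel (RectT n)
                  (Function.update g (tpp p) (g (tpp (below p)))) (tpp (below p)) := by
            simp only [slide]
            rw [if_pos ⟨hbt.mpr hr, hrt.mpr hb⟩, if_neg hgc, rightOf_tpp]
          obtain ⟨c, f', g', h1, h2, I', hc1, hc2⟩ :=
            ih _ _ _ (down_step I hb fun _ => hfc) (by simp only [below]; omega)
          exact ⟨c, f', g', e1 ▸ h1, e2 ▸ h2, I', hc1, hc2⟩
        · -- right move
          have hgc : g (below (tpp p)) ≤ g (rightOf (tpp p)) := by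
            rw [below_tpp, rightOf_tpp]
            by_contra hcon
            exact hfc ((branch_iff I hb hr).mpr hcon)
          have e1 : slide (fuel + 1) (Rect n) f p
              = slide fuel (Rect n) (Function.update f p (f (rightOf p))) (rightOf p) := by
            simp only [slide]; rw [if_pos ⟨hb, hr⟩, if_neg hfc]
          have e2 : slide (fuel + 1) (RectT n) g (tpp p)
              = slide fuel (RectT n)
                  (Function.update g (tpp p) (g (tpp (rightOf p)))) (tpp (rightOf p)) := by
            simp only [slide]
            rw [if_pos ⟨hbt.mpr hr, hrt.mpr hb⟩, if_pos hgc, below_tpp]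
          obtain ⟨c, f', g', h1, h2, I', hc1, hc2⟩ :=
            ih _ _ _ (right_step I hr fun _ => by omega) (by simp only [rightOf]; omega)
          exact ⟨c, f', g', e1 ▸ h1, e2 ▸ h2, I', hc1, hc2⟩
      · -- only below
        have e1 : slide (fuel + 1) (Rect n) f p
            = slide fuel (Rect n) (Function.update f p (f (below p))) (below p) := by
          simp only [slide]; rw [if_neg (fun h => hr h.2), if_pos hb]
        have e2 : slide (fuel + 1) (RectT n) g (tpp p)
            = slide fuel (RectT n)
                (Function.update g (tpp p) (g (tpp (below p)))) (tpp (below p)) := by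
          simp only [slide]
          rw [if_neg (fun h => hr (hbt.mp h.1)), if_neg (fun h => hr (hbt.mp h)),
            if_pos (hrt.mpr hb), rightOf_tpp]
        obtain ⟨c, f', g', h1, h2, I', hc1, hc2⟩ :=
          ih _ _ _ (down_step I hb fun h => absurd h hr) (by simp only [below]; omega)
        exact ⟨c, f', g', e1 ▸ h1, e2 ▸ h2, I', hc1, hc2⟩
    · by_cases hr : rightOf p ∈ Rect n
      · -- only right
        have e1 : slide (fuel + 1) (Rect n) f p
            = slide fuel (Rect n) (Function.update f p (f (rightOf p))) (rightOf p) := by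
          simp only [slide]; rw [if_neg (fun h => hb h.1), if_neg hb, if_pos hr]
        have e2 : slide (fuel + 1) (RectT n) g (tpp p)
            = slide fuel (RectT n)
                (Function.update g (tpp p) (g (tpp (rightOf p)))) (tpp (rightOf p)) := by
          simp only [slide]
          rw [if_neg (fun h => hb (hrt.mp h.2)), if_pos (hbt.mpr hr), below_tpp]
        obtain ⟨c, f', g', h1, h2, I', hc1, hc2⟩ :=
          ih _ _ _ (right_step I hr fun h => absurd h hb) (by simp only [rightOf]; omega)
        exact ⟨c, f', g', e1 ▸ h1, e2 ▸ h2, I', hc1, hc2⟩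
      · -- terminal
        have e1 : slide (fuel + 1) (Rect n) f p = ((Rect n).erase p, f) := by
          simp only [slide]; rw [if_neg (fun h => hb h.1), if_neg hb, if_neg hr]
        have e2 : slide (fuel + 1) (RectT n) g (tpp p) = ((RectT n).erase (tpp p), g) := by
          simp only [slide]
          rw [if_neg (fun h => hr (hbt.mp h.1)), if_neg (fun h => hr (hbt.mp h)),
            if_neg (fun h => hb (hrt.mp h))]
        exact ⟨p, f, g, e1, e2, I, hb, hr⟩

lemma card_Rect (n : ℕ) : (Rect n).card = n * 3 := by
  simp [Rect]

lemma card_RectT (n : ℕ) : (RectT n).card = n * 3 := by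
  simp [RectT, Nat.mul_comm]

lemma sum_shift {m : ℕ} {s : ℕ → Bool} :
    ∀ k, k < m → ∑ u ∈ Finset.Icc 1 k, multOf (shiftS m s) u
      = ∑ u ∈ Finset.Icc 2 (k + 1), multOf s u := by
  intro k
  induction k with
  | zero => intro _; simp
  | succ k ihk =>
    intro hk
    rw [Finset.sum_Icc_succ_top (by omega), Finset.sum_Icc_succ_top (by omega : 2 ≤ k + 1 + 1),
      ihk (by omega)]
    have h1 : multOf (shiftS m s) (k + 1) = multOf s (k + 1 + 1) := by
      simp [multOf, shiftS, show k + 1 ≠ m by omega]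
    omega

lemma sum_drop_one {s : ℕ → Bool} (hs1 : s 1 = false) :
    ∀ k, 1 ≤ k → ∑ u ∈ Finset.Icc 1 k, multOf s u
      = 1 + ∑ u ∈ Finset.Icc 2 k, multOf s u := by
  intro k hk
  have hins : Finset.Icc 1 k = insert 1 (Finset.Icc 2 k) := by
    ext x; simp [Finset.mem_Icc, Finset.mem_insert]; omega
  rw [hins, Finset.sum_insert (by simp [Finset.mem_Icc])]
  simp [multOf, hs1]

/-- If `s₁ = +`, then `(jdt(T_s))~′ = jdt(T̃_s′)`: the conjugate of the standardization
(with respect to the shifted content `s₂⋯s_m s₁`) of the promoted tableau equals the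
promotion of the conjugate of the standardization. -/
theorem jdt_standardization_plus (n m : ℕ) (s : ℕ → Bool) (f : (ℕ × ℕ) → ℕ)
    (hm : 1 ≤ m) (hs1 : s 1 = false)
    (hT : IsTableauOfContent (Rect n) m s f) :
    ∀ p ∈ RectT n,
      standardize (Rect n) (shiftS m s) (promote (Rect n) f m) (p.2, p.1)
        = promote (RectT n) (fun q => standardize (Rect n) s f (q.2, q.1)) (3 * n) p := by
  obtain ⟨hrow, hcol, hrange, hcount⟩ := hT
  -- the cell `(0,0)` is the unique cell with value 1
  have hcard1 : ((Rect n).filter (fun q => f q = 1)).card = 1 := by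
    have := hcount 1 le_rfl hm
    simpa [multOf, hs1] using this
  have hn : 1 ≤ n := by
    rcases Nat.eq_zero_or_pos n with rfl | hn
    · simp [Rect] at hcard1
    · exact hn
  have h00 : ((0, 0) : ℕ × ℕ) ∈ Rect n := by simp [mem_Rect]; omega
  have hmin : ∀ q ∈ Rect n, f (0, 0) ≤ f q := by
    intro q hq
    obtain ⟨qr, qc⟩ := q
    simp only [mem_Rect] at hq
    have hrow0 : ∀ c, c < 3 → f (0, 0) ≤ f (0, c) := by
      intro c
      induction c with
      | zero => intro _; exact le_refl _
      | succ c ihc =>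
        intro hc
        have h1 := ihc (by omega)
        have h2 : f (0, c) ≤ f (0, c + 1) := by
          have := hrow (0, c) (by simp [mem_Rect]; omega) (by simp [rightOf, mem_Rect]; omega)
          simpa [rightOf] using this
        omega
    have h1 := hrow0 qc hq.2
    rcases Nat.eq_zero_or_pos qr with rfl | hqr
    · exact h1
    · have hcol' : ∀ q ∈ Rect n, below q ∈ Rect n → q ≠ ((n + 1, 3) : ℕ × ℕ) →
          below q ≠ (n + 1, 3) → f q < f (below q) := fun q hq hbq _ _ => hcol q hq hbq
      have h2 : f (0, qc) < f (qr, qc) :=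
        col_chain (p := (n + 1, 3)) hcol' hq.2 (by show ¬((3:ℕ) = qc); omega) hqr hq.1
      omega
  have hf00 : f (0, 0) = 1 := by
    obtain ⟨q0, hq0⟩ := Finset.card_eq_one.mp hcard1
    have hq0mem : q0 ∈ (Rect n).filter (fun q => f q = 1) := by rw [hq0]; exact Finset.mem_singleton_self _
    obtain ⟨hq0R, hq0f⟩ := Finset.mem_filter.mp hq0mem
    have h1 := hmin q0 hq0R
    have h2 := (hrange (0, 0) h00).1
    omega
  have h1cell : (Rect n).filter (fun q => f q = 1) = {((0, 0) : ℕ × ℕ)} := by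
    obtain ⟨q0, hq0⟩ := Finset.card_eq_one.mp hcard1
    have : ((0, 0) : ℕ × ℕ) ∈ (Rect n).filter (fun q => f q = 1) :=
      Finset.mem_filter.mpr ⟨h00, hf00⟩
    rw [hq0] at this ⊢
    rw [Finset.mem_singleton.mp this]
  have h1unique : ∀ q ∈ Rect n, q ≠ (0, 0) → 2 ≤ f q := by
    intro q hq hne
    have h1 := (hrange q hq).1
    have h2 : f q ≠ 1 := by
      intro h
      have : q ∈ (Rect n).filter (fun r => f r = 1) := Finset.mem_filter.mpr ⟨hq, h⟩
      rw [h1cell, Finset.mem_singleton] at this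
      exact hne this
    omega
  set G0 : (ℕ × ℕ) → ℕ := fun q => standardize (Rect n) s f (q.2, q.1) with hG0
  -- initial invariant
  have I0 : SInv n m s f G0 (0, 0) := by
    constructor
    · exact h00
    · exact fun q hq hrq _ _ => hrow q hq hrq
    · exact fun q hq hbq _ _ => hcol q hq hbq
    · intro q _ hrq _
      exact absurd (congrArg Prod.snd hrq) (by simp [rightOf])
    · intro q _ hbq _
      exact absurd (congrArg Prod.fst hbq) (by simp [below])
    · exact fun q hq hne => ⟨h1unique q hq hne, (hrange q hq).2⟩
    · intro v h2 hm'
      rw [Finset.filter_erase, Finset.erase_eq_of_notMem, hcount v (by omega) hm']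
      intro hmem
      have := (Finset.mem_filter.mp hmem).2
      omega
    · intro q hq hne
      show standardize (Rect n) s f ((tpp q).2, (tpp q).1) = stdH n s f (0, 0) q
      have hqq : (((tpp q).2, (tpp q).1) : ℕ × ℕ) = q := rfl
      rw [hqq]
      unfold standardize stdH Ssum
      rw [if_pos hq]
      congr 1
      have hiff : (∃ q' ∈ Rect n, f q' = f q ∧ q'.2 < q.2)
          ↔ (∃ q' ∈ (Rect n).erase (0, 0), f q' = f q ∧ q'.2 < q.2) := by
        constructor
        · rintro ⟨q', hq', hfq', hlt⟩
          have hq'0 : q' ≠ (0, 0) := by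
            intro h; subst h
            have := h1unique q hq hne
            rw [hf00] at hfq'; omega
          exact ⟨q', Finset.mem_erase.mpr ⟨hq'0, hq'⟩, hfq', hlt⟩
        · rintro ⟨q', hq', hfq', hlt⟩
          exact ⟨q', (Finset.mem_erase.mp hq').2, hfq', hlt⟩
      simp only [hiff]
  obtain ⟨c, f', g', h1, h2, I', hcb, hcr⟩ :=
    slide_sim (n * 3 + 1) f G0 (0, 0) I0 (by simp; omega)
  have honepass : onePass ((Rect n), f) = ((Rect n).erase c, f') := by
    show slide ((Rect n).card + 1) (Rect n) f (0, 0) = _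
    rw [card_Rect]; exact h1
  have honepassG : onePass ((RectT n), G0) = ((RectT n).erase (tpp c), g') := by
    show slide ((RectT n).card + 1) (RectT n) G0 (0, 0) = _
    rw [card_RectT]; exact h2
  -- explicit description of the two promoted fillings
  have hpromF : ∀ r, promote (Rect n) f m r
      = if r ∈ (Rect n).erase c then f' r - 1 else if r ∈ Rect n then m else 0 := by
    intro r
    simp only [promote, hcard1, Function.iterate_one, honepass]
  have hG00 : G0 (0, 0) = 1 := by
    show standardize (Rect n) s f (0, 0) = 1
    unfold standardize
    rw [if_pos h00, hf00]
    simp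
  have hG1 : (RectT n).filter (fun r => G0 r = 1) = {((0, 0) : ℕ × ℕ)} := by
    apply Finset.eq_singleton_iff_unique_mem.mpr
    constructor
    · exact Finset.mem_filter.mpr ⟨by simp [mem_RectT]; omega, hG00⟩
    · intro r hr
      obtain ⟨hrT, hrG⟩ := Finset.mem_filter.mp hr
      have hrR : ((r.2, r.1) : ℕ × ℕ) ∈ Rect n := by
        simp only [mem_RectT] at hrT; simp only [mem_Rect]; omega
      have hstd : standardize (Rect n) s f (r.2, r.1) = 1 := hrG
      have hfr : f (r.2, r.1) = 1 := by
        by_contra hne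
        have h2 : 2 ≤ f (r.2, r.1) := by
          have := (hrange _ hrR).1; omega
        have hS : 1 ≤ Ssum s (f (r.2, r.1)) := Ssum_pos s h2
        unfold standardize at hstd
        rw [if_pos hrR] at hstd
        have : (1:ℕ) ≤ if ∃ q ∈ Rect n, f q = f (r.2, r.1) ∧ q.2 < (r.2, r.1).2
            then 2 else 1 := by split <;> omega
        unfold Ssum at hS
        omega
      have : ((r.2, r.1) : ℕ × ℕ) ∈ (Rect n).filter (fun q => f q = 1) :=
        Finset.mem_filter.mpr ⟨hrR, hfr⟩
      rw [h1cell, Finset.mem_singleton] at this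
      have h1 : r.2 = 0 := congrArg Prod.fst this
      have h2 : r.1 = 0 := congrArg Prod.snd this
      obtain ⟨r1, r2⟩ := r
      simp only at h1 h2
      simp [h1, h2]
  have hGcard : ((RectT n).filter (fun r => G0 r = 1)).card = 1 := by
    rw [hG1]; rfl
  have hpromG : ∀ r, promote (RectT n) G0 (3 * n) r
      = if r ∈ (RectT n).erase (tpp c) then g' r - 1
        else if r ∈ RectT n then 3 * n else 0 := by
    intro r
    simp only [promote, hGcard, Function.iterate_one, honepassG]
  -- total number of cells
  have htotal : ∑ v ∈ Finset.Icc 1 m, multOf s v = 3 * n := by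
    have hfib : (Rect n).card
        = ∑ v ∈ Finset.Icc 1 m, ((Rect n).filter (fun q => f q = v)).card :=
      Finset.card_eq_sum_card_fiberwise (fun x hx => Finset.mem_Icc.mpr (hrange x hx))
    have hco : ∑ v ∈ Finset.Icc 1 m, ((Rect n).filter (fun q => f q = v)).card
        = ∑ v ∈ Finset.Icc 1 m, multOf s v :=
      Finset.sum_congr rfl fun v hv =>
        hcount v (Finset.mem_Icc.mp hv).1 (Finset.mem_Icc.mp hv).2
    rw [card_Rect] at hfib
    omega
  -- final computation
  intro p hp
  rw [hpromG p]
  unfold standardize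
  have hqT : ((p.2, p.1) : ℕ × ℕ) ∈ Rect n := by
    simp only [mem_RectT] at hp; simp only [mem_Rect]; omega
  rw [if_pos hqT]
  have hptc : p = tpp (p.2, p.1) := rfl
  rcases eq_or_ne ((p.2, p.1) : ℕ × ℕ) c with hc | hc
  · -- the transposed cell is the vacated corner
    have hFc : promote (Rect n) f m (p.2, p.1) = m := by
      rw [hpromF, hc]
      rw [if_neg (Finset.notMem_erase c (Rect n)), if_pos I'.hp]
    have hsum : ∑ u ∈ Finset.Icc 1 (promote (Rect n) f m (p.2, p.1) - 1),
        multOf (shiftS m s) u = 3 * n - 1 := by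
      rw [hFc, sum_shift (m - 1) (by omega), show m - 1 + 1 = m by omega]
      have := sum_drop_one hs1 m hm
      omega
    have hcond : ¬ ∃ r ∈ Rect n, promote (Rect n) f m r
        = promote (Rect n) f m (p.2, p.1) ∧ r.2 < (p.2, p.1).2 := by
      rintro ⟨r, hr, hfr, hlt⟩
      rw [hFc, hpromF r] at hfr
      by_cases hrc : r ∈ (Rect n).erase c
      · rw [if_pos hrc] at hfr
        have := I'.range r (Finset.mem_erase.mp hrc).2 (Finset.mem_erase.mp hrc).1
        omega
      · rw [if_neg hrc, if_pos hr] at hfr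
        have hrc' : r = c := by
          by_contra hne
          exact hrc (Finset.mem_erase.mpr ⟨hne, hr⟩)
        rw [hrc', ← hc] at hlt
        omega
    rw [hsum, if_neg hcond]
    have hpc : p = tpp c := by rw [hptc, hc]
    rw [hpc]
    rw [if_neg (Finset.notMem_erase _ _), if_pos (by rw [← hpc]; exact hp)]
    omega
  · -- the transposed cell is an ordinary cell
    have hqe : ((p.2, p.1) : ℕ × ℕ) ∈ (Rect n).erase c := Finset.mem_erase.mpr ⟨hc, hqT⟩
    have hF : promote (Rect n) f m (p.2, p.1) = f' (p.2, p.1) - 1 := by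
      rw [hpromF, if_pos hqe]
    have hrange' := I'.range (p.2, p.1) hqT hc
    have hS : 1 ≤ Ssum s (f' (p.2, p.1)) := Ssum_pos s hrange'.1
    have hsum : ∑ u ∈ Finset.Icc 1 (promote (Rect n) f m (p.2, p.1) - 1),
        multOf (shiftS m s) u = Ssum s (f' (p.2, p.1)) - 1 := by
      rw [hF, sum_shift (f' (p.2, p.1) - 1 - 1) (by omega),
        show f' (p.2, p.1) - 1 - 1 + 1 = f' (p.2, p.1) - 1 by omega]
      have := sum_drop_one hs1 (f' (p.2, p.1) - 1) (by omega)
      unfold Ssum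
      omega
    have hiff : (∃ r ∈ Rect n, promote (Rect n) f m r
          = promote (Rect n) f m (p.2, p.1) ∧ r.2 < (p.2, p.1).2)
        ↔ (∃ r ∈ (Rect n).erase c, f' r = f' (p.2, p.1) ∧ r.2 < (p.2, p.1).2) := by
      constructor
      · rintro ⟨r, hr, hfr, hlt⟩
        rw [hF, hpromF r] at hfr
        by_cases hrc : r ∈ (Rect n).erase c
        · rw [if_pos hrc] at hfr
          have := I'.range r (Finset.mem_erase.mp hrc).2 (Finset.mem_erase.mp hrc).1
          exact ⟨r, hrc, by omega, hlt⟩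
        · rw [if_neg hrc, if_pos hr] at hfr
          omega
      · rintro ⟨r, hre, hfr, hlt⟩
        refine ⟨r, (Finset.mem_erase.mp hre).2, ?_, hlt⟩
        rw [hF, hpromF r, if_pos hre, hfr]
    have hgd := I'.gD (p.2, p.1) hqT hc
    have hgp : g' p = stdH n s f' c (p.2, p.1) := hgd
    have hpmem : p ∈ (RectT n).erase (tpp c) := by
      refine Finset.mem_erase.mpr ⟨?_, hp⟩
      intro h
      exact hc (by rw [hptc] at h; exact tpp_inj h)
    rw [if_pos hpmem, hgp]
    unfold stdH
    rw [hsum]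
    have hco : (∃ r ∈ Rect n, promote (Rect n) f m r
          = promote (Rect n) f m (p.2, p.1) ∧ r.2 < (p.2, p.1).2)
        = (∃ r ∈ (Rect n).erase c, f' r = f' (p.2, p.1) ∧ r.2 < (p.2, p.1).2) :=
      propext hiff
    simp only [hco]
    have harith : ∀ S t : ℕ, 1 ≤ S → S - 1 + t = S + t - 1 := by
      intro S t h; omega
    by_cases hx : ∃ r ∈ (Rect n).erase c, f' r = f' (p.2, p.1) ∧ r.2 < (p.2, p.1).2
    · rw [if_pos hx]
      exact harith _ 2 hS
    · rw [if_neg hx]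
      exact harith _ 1 hS
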